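/- Let $a, \gamma > 0$ and let $f : (0,\infty) \to (0,\infty)$ be differentiable and satisfy the ODE $f'(r) = \frac{a}{r}\left(1 - C_r (r^{-a} f(r))^{\gamma} + \delta_r\right) f(r)$ for all $r \geq 1$, where $r \mapsto C_r$ is a continuous function converging to a positive limit $C$ as $r \to \infty$, and $r \mapsto \delta_r$ is a logarithmically integrable error function. Then $f(r) \sim (a \gamma C \log r)^{-1/\gamma}\, r^{a}$ as $r \to \infty$. -/

import Mathlib

open Real Filter MeasureTheory

/-- A logarithmically integrable error function: measurable, tending to zero at infinity,
with `|δ r| / r` integrable on `[r₀, ∞)` for some `r₀`. -/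
def LogIntegrableError (δ : ℝ → ℝ) : Prop :=
  Measurable δ ∧ Tendsto δ atTop (nhds 0) ∧
    ∃ r₀ : ℝ, IntegrableOn (fun r => |δ r| / r) (Set.Ici r₀) volume

/- ### Auxiliary lemmas -/

lemma tail_tendsto_zero {g : ℝ → ℝ} {r₀ : ℝ} (hg : IntegrableOn g (Set.Ici r₀) volume) :
    Tendsto (fun R => ∫ x in Set.Ici R, g x) atTop (nhds 0) := by
  have hgIoi : IntegrableOn g (Set.Ioi r₀) volume := hg.mono_set Set.Ioi_subset_Ici_self
  have hlim : Tendsto (fun R => ∫ x in r₀..R, g x) atTop (nhds (∫ x in Set.Ioi r₀, g x)) :=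
    intervalIntegral_tendsto_integral_Ioi r₀ hgIoi tendsto_id
  have key : ∀ᶠ R in atTop, ∫ x in Set.Ici R, g x
      = (∫ x in Set.Ioi r₀, g x) - ∫ x in r₀..R, g x := by
    filter_upwards [eventually_ge_atTop r₀] with R hR
    have hsplit : Set.Ioi r₀ = Set.Ioc r₀ R ∪ Set.Ioi R := (Set.Ioc_union_Ioi_eq_Ioi hR).symm
    have hdisj : Disjoint (Set.Ioc r₀ R) (Set.Ioi R) := by
      apply Set.disjoint_left.2
      intro x hx hx'
      exact absurd hx.2 (not_le.2 hx')
    have := MeasureTheory.setIntegral_union hdisj measurableSet_Ioi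
      (hgIoi.mono_set (by rw [hsplit]; exact Set.subset_union_left))
      (hgIoi.mono_set (by rw [hsplit]; exact Set.subset_union_right))
    rw [← hsplit] at this
    rw [MeasureTheory.integral_Ici_eq_integral_Ioi, intervalIntegral.integral_of_le hR, this]
    ring
  have h2 : Tendsto (fun R => (∫ x in Set.Ioi r₀, g x) - ∫ x in r₀..R, g x) atTop
      (nhds ((∫ x in Set.Ioi r₀, g x) - ∫ x in Set.Ioi r₀, g x)) :=
    tendsto_const_nhds.sub hlim
  rw [sub_self] at h2
  exact h2.congr' (key.mono fun R hR => hR.symm)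

lemma intInt_div {C : ℝ → ℝ} (hC_cont : Continuous C) {x y : ℝ} (hx : 0 < x) (hxy : x ≤ y) :
    IntervalIntegrable (fun t => C t / t) volume x y := by
  apply ContinuousOn.intervalIntegrable
  apply ContinuousOn.div hC_cont.continuousOn continuousOn_id
  intro t ht
  rw [Set.uIcc_of_le hxy] at ht
  exact ne_of_gt (lt_of_lt_of_le hx ht.1)

lemma integral_div_log {C : ℝ → ℝ} (hC_cont : Continuous C) {Clim : ℝ}
    (hC : Tendsto C atTop (nhds Clim)) {R₀ : ℝ} (hR₀ : 1 ≤ R₀) :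
    Tendsto (fun r => (∫ t in R₀..r, C t / t) / Real.log r) atTop (nhds Clim) := by
  have hR₀pos : (0:ℝ) < R₀ := lt_of_lt_of_le one_pos hR₀
  rw [Metric.tendsto_nhds]
  intro η hη
  have hη3 : 0 < η / 3 := by positivity
  have h1 : ∀ᶠ t in atTop, |C t - Clim| ≤ η / 3 := by
    have := Metric.tendsto_nhds.mp hC (η/3) hη3
    filter_upwards [this] with t ht
    rw [Real.dist_eq] at ht; exact le_of_lt ht
  obtain ⟨R₁', hR₁'⟩ := eventually_atTop.mp h1
  set R₁ := max R₁' R₀ with hR₁def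
  have hR₁R₀ : R₀ ≤ R₁ := le_max_right _ _
  have hR₁1 : 1 ≤ R₁ := le_trans hR₀ hR₁R₀
  have hR₁pos : (0:ℝ) < R₁ := lt_of_lt_of_le one_pos hR₁1
  have hR₁bound : ∀ t ≥ R₁, |C t - Clim| ≤ η / 3 := fun t ht =>
    hR₁' t (le_trans (le_max_left _ _) ht)
  set K : ℝ := |∫ t in R₀..R₁, C t / t| + |Clim| * Real.log R₁ with hK
  have hlogR₁ : 0 ≤ Real.log R₁ := Real.log_nonneg hR₁1
  have hK0 : 0 ≤ K := by positivity
  filter_upwards [eventually_ge_atTop R₁,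
    tendsto_log_atTop.eventually_ge_atTop (max 1 (K / (η/3)))] with r hr hlogr
  have hlogr1 : (1:ℝ) ≤ Real.log r := le_trans (le_max_left _ _) hlogr
  have hlogrpos : 0 < Real.log r := lt_of_lt_of_le one_pos hlogr1
  have hrpos : 0 < r := lt_of_lt_of_le hR₁pos hr
  have h0uIcc : (0:ℝ) ∉ Set.uIcc R₁ r := by
    rw [Set.uIcc_of_le hr]
    intro h; exact absurd hR₁pos (not_lt.2 h.1)
  have hsplit : ∫ t in R₀..r, C t / t
      = (∫ t in R₀..R₁, C t / t) + ∫ t in R₁..r, C t / t :=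
    (intervalIntegral.integral_add_adjacent_intervals
      (intInt_div hC_cont hR₀pos hR₁R₀) (intInt_div hC_cont hR₁pos hr)).symm
  have hconst : ∀ c : ℝ, ∫ t in R₁..r, c / t = c * (Real.log r - Real.log R₁) := by
    intro c
    have : ∫ t in R₁..r, c / t = c * ∫ t in R₁..r, 1 / t := by
      rw [← intervalIntegral.integral_const_mul]
      congr 1; ext t; ring
    rw [this, integral_one_div h0uIcc, Real.log_div (ne_of_gt hrpos) (ne_of_gt hR₁pos)]
  have hdiffInt : IntervalIntegrable (fun t => C t / t - Clim / t) volume R₁ r :=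
    (intInt_div hC_cont hR₁pos hr).sub (intInt_div continuous_const hR₁pos hr)
  have habsInt : IntervalIntegrable (fun t => (η/3) / t) volume R₁ r :=
    intInt_div continuous_const hR₁pos hr
  have hmain : |(∫ t in R₁..r, C t / t) - Clim * (Real.log r - Real.log R₁)|
      ≤ (η/3) * (Real.log r - Real.log R₁) := by
    rw [← hconst Clim, ← intervalIntegral.integral_sub (intInt_div hC_cont hR₁pos hr)
      (intInt_div continuous_const hR₁pos hr)]
    calc |∫ t in R₁..r, (C t / t - Clim / t)|
        ≤ ∫ t in R₁..r, |C t / t - Clim / t| :=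
          intervalIntegral.abs_integral_le_integral_abs hr
      _ ≤ ∫ t in R₁..r, (η/3) / t := by
          apply intervalIntegral.integral_mono_on hr hdiffInt.abs habsInt
          intro t ht
          have htpos : 0 < t := lt_of_lt_of_le hR₁pos ht.1
          rw [div_sub_div_same, abs_div, abs_of_pos htpos]
          gcongr
          exact hR₁bound t ht.1
      _ = (η/3) * (Real.log r - Real.log R₁) := hconst _
  have hloggap : Real.log r - Real.log R₁ ≤ Real.log r := by linarith
  have hloggap0 : 0 ≤ Real.log r - Real.log R₁ := by
    have := Real.log_le_log hR₁pos hr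
    linarith
  have key : |(∫ t in R₀..r, C t / t) - Clim * Real.log r| ≤ K + (η/3) * Real.log r := by
    rw [hsplit]
    have heq : (∫ t in R₀..R₁, C t / t) + (∫ t in R₁..r, C t / t) - Clim * Real.log r
        = (∫ t in R₀..R₁, C t / t)
          + ((∫ t in R₁..r, C t / t) - Clim * (Real.log r - Real.log R₁))
          + (-(Clim * Real.log R₁)) := by ring
    rw [heq]
    have h3 := abs_add_three (∫ t in R₀..R₁, C t / t)
      ((∫ t in R₁..r, C t / t) - Clim * (Real.log r - Real.log R₁)) (-(Clim * Real.log R₁))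
    have h4 : |-(Clim * Real.log R₁)| = |Clim| * Real.log R₁ := by
      rw [abs_neg, abs_mul, abs_of_nonneg hlogR₁]
    have h5 : (η/3) * (Real.log r - Real.log R₁) ≤ (η/3) * Real.log r := by
      nlinarith
    rw [h4] at h3
    rw [hK]
    linarith
  rw [Real.dist_eq]
  have heq2 : (∫ t in R₀..r, C t / t) / Real.log r - Clim
      = ((∫ t in R₀..r, C t / t) - Clim * Real.log r) / Real.log r := by
    field_simp
  rw [heq2, abs_div, abs_of_pos hlogrpos, div_lt_iff₀ hlogrpos]
  have hK' : K ≤ (η/3) * Real.log r := by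
    have h6 : K / (η/3) ≤ Real.log r := le_trans (le_max_right _ _) hlogr
    calc K = (K / (η/3)) * (η/3) := by field_simp
    _ ≤ Real.log r * (η/3) := by gcongr
    _ = (η/3) * Real.log r := by ring
  calc |(∫ t in R₀..r, C t / t) - Clim * Real.log r| ≤ K + (η/3) * Real.log r := key
    _ ≤ (η/3) * Real.log r + (η/3) * Real.log r := by linarith
    _ < η * Real.log r := by nlinarith

lemma deriv_step (a γ : ℝ)
    (f : ℝ → ℝ) (hf_pos : ∀ r > (0:ℝ), 0 < f r)
    (C δ : ℝ → ℝ)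
    (hode : ∀ r ≥ (1:ℝ), HasDerivAt f
      ((a / r) * (1 - C r * (r ^ (-a) * f r) ^ γ + δ r) * f r) r) :
    ∀ r ≥ (1:ℝ), HasDerivAt (fun t => (t ^ (-a) * f t) ^ (-γ))
      ((a * γ / r) * (C r - δ r * (r ^ (-a) * f r) ^ (-γ))) r := by
  intro r hr
  have hrpos : (0:ℝ) < r := lt_of_lt_of_le one_pos hr
  have hfr : 0 < f r := hf_pos r hrpos
  have hP : 0 < r ^ (-a) := Real.rpow_pos_of_pos hrpos _
  have hH : 0 < r ^ (-a) * f r := mul_pos hP hfr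
  have h1 : HasDerivAt (fun t : ℝ => t ^ (-a)) (-a * r ^ (-a - 1)) r :=
    Real.hasDerivAt_rpow_const (Or.inl (ne_of_gt hrpos))
  have hh : HasDerivAt (fun t => t ^ (-a) * f t)
      (-a * r ^ (-a - 1) * f r
        + r ^ (-a) * ((a / r) * (1 - C r * (r ^ (-a) * f r) ^ γ + δ r) * f r)) r :=
    h1.mul (hode r hr)
  have hv' := hh.rpow_const (p := -γ) (Or.inl (ne_of_gt hH))
  convert hv' using 1
  have er : r ≠ 0 := ne_of_gt hrpos
  have e1 : r ^ (-a - 1) = r ^ (-a) * r⁻¹ := by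
    rw [show -a - 1 = -a + (-1) by ring, Real.rpow_add hrpos, Real.rpow_neg_one]
  have eHQ : (r ^ (-a) * f r) * (r ^ (-a) * f r) ^ (-γ - 1)
      = (r ^ (-a) * f r) ^ (-γ) := by
    rw [show -γ = (-γ - 1) + 1 by ring, Real.rpow_add_one (ne_of_gt hH)]
    ring
  have eγV : (r ^ (-a) * f r) ^ γ * (r ^ (-a) * f r) ^ (-γ) = 1 := by
    rw [← Real.rpow_add hH]
    simp
  rw [e1]
  linear_combination (-(a * γ / r)) * (C r * (r ^ (-a) * f r) ^ γ - δ r) * eHQ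
    - (a * γ / r) * C r * eγV

set_option maxHeartbeats 2000000 in
theorem ode_log_correction (a γ : ℝ) (ha : 0 < a) (hγ : 0 < γ)
    (f : ℝ → ℝ) (hf_pos : ∀ r > (0:ℝ), 0 < f r)
    (C : ℝ → ℝ) (hC_cont : Continuous C) (Clim : ℝ) (hClim_pos : 0 < Clim)
    (hC : Tendsto C atTop (nhds Clim))
    (δ : ℝ → ℝ) (hδ : LogIntegrableError δ)
    (hode : ∀ r ≥ (1:ℝ), HasDerivAt f
      ((a / r) * (1 - C r * (r ^ (-a) * f r) ^ γ + δ r) * f r) r) :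
    Tendsto (fun r => f r / ((a * γ * Clim * Real.log r) ^ (-1 / γ) * r ^ a))
      atTop (nhds 1) := by
  obtain ⟨hδm, hδ0, r₀, hδint⟩ := hδ
  set v : ℝ → ℝ := fun r => (r ^ (-a) * f r) ^ (-γ) with hvdef
  have hv_deriv : ∀ r ≥ (1:ℝ), HasDerivAt v ((a * γ / r) * (C r - δ r * v r)) r :=
    deriv_step a γ f hf_pos C δ hode
  have hv_pos : ∀ r > (0:ℝ), 0 < v r := fun r hr =>
    Real.rpow_pos_of_pos (mul_pos (Real.rpow_pos_of_pos hr _) (hf_pos r hr)) _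
  have hv_contOn : ∀ x y : ℝ, 1 ≤ x → ContinuousOn v (Set.Icc x y) := by
    intro x y hx t ht
    exact ((hv_deriv t (le_trans hx ht.1)).continuousAt).continuousWithinAt
  -- the main asymptotics for v
  have hmain : Tendsto (fun r => v r / (a * γ * Clim * Real.log r)) atTop (nhds 1) := by
    rw [Metric.tendsto_nhds]
    intro η hη
    set ε := min (η/7) (1/4 : ℝ) with hεdef
    have hε_pos : 0 < ε := lt_min (by positivity) (by norm_num)
    have hε14 : ε ≤ 1/4 := min_le_right _ _
    have hε7 : ε ≤ η/7 := min_le_left _ _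
    have hε1 : (0:ℝ) < 1 - ε := by linarith
    -- choose the base point R₀
    have htail0 : Tendsto (fun R => a * γ * ∫ t in Set.Ici R, |δ t| / t) atTop (nhds 0) := by
      have h0 := (tail_tendsto_zero hδint).const_mul (a*γ)
      simpa using h0
    have htail' : ∀ᶠ R in atTop, a * γ * ∫ t in Set.Ici R, |δ t| / t ≤ ε :=
      htail0.eventually (eventually_le_nhds hε_pos)
    obtain ⟨Rc, hRc⟩ := eventually_atTop.mp (hC.eventually (eventually_ge_nhds hClim_pos))
    obtain ⟨R₀, hR₀tail, hR₀ge⟩ :=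
      (htail'.and (eventually_ge_atTop (max (max 2 r₀) Rc))).exists
    have hR₀2 : (2:ℝ) ≤ R₀ :=
      le_trans (le_trans (le_max_left _ _) (le_max_left _ _)) hR₀ge
    have hR₀1 : (1:ℝ) ≤ R₀ := by linarith
    have hR₀pos : (0:ℝ) < R₀ := by linarith
    have hR₀r₀ : r₀ ≤ R₀ := le_trans (le_trans (le_max_right _ _) (le_max_left _ _)) hR₀ge
    have hRcR₀ : Rc ≤ R₀ := le_trans (le_max_right _ _) hR₀ge
    have hCnon : ∀ t, R₀ ≤ t → 0 ≤ C t := fun t ht => hRc t (le_trans hRcR₀ ht)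
    have hδIci : IntegrableOn (fun t => |δ t| / t) (Set.Ici R₀) volume :=
      hδint.mono_set (Set.Ici_subset_Ici.2 hR₀r₀)
    have hδnn : ∀ t, R₀ ≤ t → 0 ≤ |δ t| / t := fun t ht =>
      div_nonneg (abs_nonneg _) (by linarith)
    set g₁ : ℝ → ℝ := fun t => (a*γ) * (C t / t) with hg₁def
    set g₂ : ℝ → ℝ := fun t => (a*γ) * (δ t * v t / t) with hg₂def
    have hint₁ : ∀ x y : ℝ, 0 < x → x ≤ y → IntervalIntegrable g₁ volume x y :=
      fun x y hx hxy => (intInt_div hC_cont hx hxy).const_mul _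
    have hint₂ : ∀ s, R₀ ≤ s → IntervalIntegrable g₂ volume R₀ s := by
      intro s hs
      rw [intervalIntegrable_iff_integrableOn_Icc_of_le hs]
      obtain ⟨M, hM⟩ := (isCompact_Icc (a := R₀) (b := s)).exists_bound_of_continuousOn
        (hv_contOn R₀ s hR₀1)
      have hM0 : 0 ≤ M := le_trans (norm_nonneg _) (hM R₀ ⟨le_refl _, hs⟩)
      have hδIcc : IntegrableOn (fun t => |δ t| / t) (Set.Icc R₀ s) volume :=
        hδIci.mono_set (fun t ht => ht.1)
      apply Integrable.mono' (hδIcc.const_mul ((a*γ) * M))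
      · apply AEStronglyMeasurable.const_mul
        simp only [div_eq_mul_inv]
        exact ((hδm.aestronglyMeasurable.restrict.mul
          ((hv_contOn R₀ s hR₀1).aestronglyMeasurable measurableSet_Icc)).mul
          (measurable_inv.aestronglyMeasurable.restrict))
      · rw [ae_restrict_iff' measurableSet_Icc]
        apply ae_of_all
        intro t ht
        have htpos : 0 < t := lt_of_lt_of_le hR₀pos ht.1
        have hvb : |v t| ≤ M := hM t ht
        have haγ : (0:ℝ) < a * γ := by positivity
        have h1 : ‖g₂ t‖ = (a*γ) * (|δ t| / t) * |v t| := by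
          have hg : g₂ t = (a*γ) * (δ t * v t / t) := rfl
          rw [hg, Real.norm_eq_abs, abs_mul, abs_of_pos haγ, abs_div, abs_mul,
            abs_of_pos htpos]
          ring
        rw [h1, show (a*γ) * M * (|δ t| / t) = (a*γ) * (|δ t| / t) * M by ring]
        exact mul_le_mul_of_nonneg_left hvb (by positivity)
    have hFTC : ∀ s, R₀ ≤ s →
        v s = v R₀ + (∫ t in R₀..s, g₁ t) - ∫ t in R₀..s, g₂ t := by
      intro s hs
      have heq : ∀ t ∈ Set.uIcc R₀ s, HasDerivAt v (g₁ t - g₂ t) t := by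
        intro t ht
        rw [Set.uIcc_of_le hs] at ht
        have ht1 : (1:ℝ) ≤ t := le_trans hR₀1 ht.1
        have h := hv_deriv t ht1
        have he : g₁ t - g₂ t = a * γ / t * (C t - δ t * v t) := by
          have e1 : g₁ t = (a*γ) * (C t / t) := rfl
          have e2 : g₂ t = (a*γ) * (δ t * v t / t) := rfl
          rw [e1, e2]; ring
        rw [he]; exact h
      have hi := intervalIntegral.integral_eq_sub_of_hasDerivAt heq
        ((hint₁ R₀ s hR₀pos hs).sub (hint₂ s hs))
      rw [intervalIntegral.integral_sub (hint₁ R₀ s hR₀pos hs) (hint₂ s hs)] at hi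
      linarith [hi]
    have hg₁nn : ∀ t, R₀ ≤ t → 0 ≤ g₁ t := by
      intro t ht
      have htpos : 0 < t := lt_of_lt_of_le hR₀pos ht
      exact mul_nonneg (by positivity) (div_nonneg (hCnon t ht) htpos.le)
    have hJmono : ∀ s r', R₀ ≤ s → s ≤ r' →
        (∫ t in R₀..s, g₁ t) ≤ ∫ t in R₀..r', g₁ t := by
      intro s r' hs hsr
      have h := intervalIntegral.integral_add_adjacent_intervals
        (hint₁ R₀ s hR₀pos hs) (hint₁ s r' (lt_of_lt_of_le hR₀pos hs) hsr)
      have h2 : 0 ≤ ∫ t in s..r', g₁ t :=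
        intervalIntegral.integral_nonneg hsr (fun u hu => hg₁nn u (le_trans hs hu.1))
      linarith [h, h2]
    -- the Grönwall-type bounds
    have hbounds : ∀ r, R₀ ≤ r →
        (v r ≤ (v R₀ + ∫ t in R₀..r, g₁ t) / (1-ε)) ∧
        ((v R₀ + ∫ t in R₀..r, g₁ t) * (1-2*ε) / (1-ε) ≤ v r) := by
      intro r hr
      obtain ⟨t₀, ht₀mem, ht₀max⟩ := (isCompact_Icc (a := R₀) (b := r)).exists_isMaxOn
        ⟨R₀, le_refl R₀, hr⟩ (hv_contOn R₀ r hR₀1)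
      have hvt₀pos : 0 < v t₀ := hv_pos t₀ (lt_of_lt_of_le hR₀pos ht₀mem.1)
      have hIb : ∀ s, s ∈ Set.Icc R₀ r → |∫ t in R₀..s, g₂ t| ≤ ε * v t₀ := by
        intro s hs
        have hs1 : R₀ ≤ s := hs.1
        have hδIcc : IntegrableOn (fun t => |δ t| / t) (Set.Icc R₀ s) volume :=
          hδIci.mono_set (fun t ht => ht.1)
        have hRHSint : IntervalIntegrable (fun t => (a*γ) * (|δ t|/t) * v t₀)
            volume R₀ s := by
          rw [intervalIntegrable_iff_integrableOn_Icc_of_le hs1]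
          exact (hδIcc.const_mul (a*γ)).mul_const (v t₀)
        calc |∫ t in R₀..s, g₂ t| ≤ ∫ t in R₀..s, |g₂ t| :=
              intervalIntegral.abs_integral_le_integral_abs hs1
          _ ≤ ∫ t in R₀..s, (a*γ) * (|δ t|/t) * v t₀ := by
              apply intervalIntegral.integral_mono_on hs1 (hint₂ s hs1).abs hRHSint
              intro t ht
              have htpos : 0 < t := lt_of_lt_of_le hR₀pos ht.1
              have hvt : 0 < v t := hv_pos t htpos
              have hvle : v t ≤ v t₀ := ht₀max ⟨ht.1, le_trans ht.2 hs.2⟩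
              have haγ : (0:ℝ) < a * γ := by positivity
              have h1 : |g₂ t| = (a*γ) * (|δ t| / t) * v t := by
                have hg : g₂ t = (a*γ) * (δ t * v t / t) := rfl
                rw [hg, abs_mul, abs_of_pos haγ, abs_div, abs_mul, abs_of_pos htpos,
                  abs_of_pos hvt]
                ring
              rw [h1]
              exact mul_le_mul_of_nonneg_left hvle (by positivity)
          _ = (a*γ) * (∫ t in R₀..s, |δ t|/t) * v t₀ := by
              rw [intervalIntegral.integral_mul_const, intervalIntegral.integral_const_mul]
          _ ≤ ε * v t₀ := by
              have hle : (∫ t in R₀..s, |δ t|/t) ≤ ∫ t in Set.Ici R₀, |δ t|/t := by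
                rw [intervalIntegral.integral_of_le hs1]
                apply setIntegral_mono_set hδIci
                · exact (ae_restrict_iff' measurableSet_Ici).2
                    (ae_of_all _ (fun t ht => hδnn t ht))
                · exact HasSubset.Subset.eventuallyLE
                    (fun t ht => le_of_lt ht.1)
              have h2 : (a*γ) * (∫ t in R₀..s, |δ t|/t) ≤ ε :=
                le_trans (mul_le_mul_of_nonneg_left hle (by positivity)) hR₀tail
              nlinarith [hvt₀pos]
      have h₁ := hFTC t₀ ht₀mem.1
      have h₂ := hFTC r hr
      have hJt₀ : (∫ t in R₀..t₀, g₁ t) ≤ ∫ t in R₀..r, g₁ t :=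
        hJmono t₀ r ht₀mem.1 ht₀mem.2
      have habs₁ := abs_le.mp (hIb t₀ ht₀mem)
      have habs₂ := abs_le.mp (hIb r ⟨hr, le_refl r⟩)
      have hvt₀ub : v t₀ * (1-ε) ≤ v R₀ + ∫ t in R₀..r, g₁ t := by
        nlinarith [habs₁.1, hJt₀, h₁]
      constructor
      · have h3 : v r ≤ v t₀ := ht₀max ⟨hr, le_refl r⟩
        rw [le_div_iff₀ hε1]
        nlinarith [mul_le_mul_of_nonneg_right h3 hε1.le]
      · rw [div_le_iff₀ hε1]
        nlinarith [h₂, mul_le_mul_of_nonneg_right habs₂.2 hε1.le,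
          mul_le_mul_of_nonneg_left hvt₀ub hε_pos.le]
    -- limits
    have hLtop : Tendsto (fun r => a*γ*Clim*Real.log r) atTop atTop :=
      Tendsto.const_mul_atTop (by positivity) tendsto_log_atTop
    have hB : Tendsto (fun r => v R₀ / (a*γ*Clim*Real.log r)) atTop (nhds 0) :=
      Tendsto.div_atTop tendsto_const_nhds hLtop
    have hq : Tendsto (fun r => (∫ t in R₀..r, g₁ t) / (a*γ*Clim*Real.log r))
        atTop (nhds 1) := by
      have h1 := integral_div_log hC_cont hC hR₀1
      have h2 := h1.div_const Clim
      rw [div_self (ne_of_gt hClim_pos)] at h2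
      apply h2.congr'
      filter_upwards [eventually_gt_atTop 1] with r hr
      have hlr : 0 < Real.log r := Real.log_pos hr
      have he : (∫ t in R₀..r, g₁ t) = (a*γ) * ∫ t in R₀..r, C t / t := by
        rw [hg₁def]
        exact intervalIntegral.integral_const_mul _ _
      rw [he]
      field_simp
    have hqev := Metric.tendsto_nhds.mp hq ε hε_pos
    have hBev := Metric.tendsto_nhds.mp hB ε hε_pos
    have hLposev : ∀ᶠ r in atTop, 0 < a*γ*Clim*Real.log r :=
      hLtop.eventually_gt_atTop 0
    filter_upwards [eventually_ge_atTop R₀, hqev, hBev, hLposev] with r hrR₀ hq' hB' hL'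
    rw [Real.dist_eq] at hq' hB' ⊢
    rw [sub_zero] at hB'
    have hub := (hbounds r hrR₀).1
    have hlb := (hbounds r hrR₀).2
    have habsq := abs_lt.mp hq'
    have hq1 : (∫ t in R₀..r, g₁ t) < (1+ε) * (a*γ*Clim*Real.log r) :=
      (div_lt_iff₀ hL').mp (by linarith [habsq.2])
    have hq2 : (1-ε) * (a*γ*Clim*Real.log r) < ∫ t in R₀..r, g₁ t := by
      rw [← lt_div_iff₀ hL']
      linarith [habsq.1]
    have hB1 : v R₀ < ε * (a*γ*Clim*Real.log r) :=
      (div_lt_iff₀ hL').mp (lt_of_abs_lt hB')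
    have hvR₀pos : 0 < v R₀ := hv_pos R₀ hR₀pos
    have hub' : v r * (1-ε) ≤ v R₀ + ∫ t in R₀..r, g₁ t := (le_div_iff₀ hε1).mp hub
    have hlb' : (v R₀ + ∫ t in R₀..r, g₁ t) * (1-2*ε) ≤ v r * (1-ε) := by
      rw [← div_le_iff₀ hε1]
      exact hlb
    rw [abs_lt]
    have hεη : 7 * ε ≤ η := by linarith
    constructor
    · -- lower bound
      have h1 : ((∫ t in R₀..r, g₁ t)) * (1-2*ε) ≤ v r * (1-ε) := by
        nlinarith [hvR₀pos, hε14]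
      have h2 : ((1-ε) * (a*γ*Clim*Real.log r)) * (1-2*ε) ≤ v r * (1-ε) := by
        nlinarith [hq2, hε14]
      have h3 : (a*γ*Clim*Real.log r) * (1-2*ε) ≤ v r := by
        nlinarith [hε1]
      have h4 : (1-η) * (a*γ*Clim*Real.log r) < (a*γ*Clim*Real.log r) * (1-2*ε) := by
        nlinarith [hL', hη]
      have h5 : (1-η) * (a*γ*Clim*Real.log r) < v r := lt_of_lt_of_le h4 h3
      have h6 : 1-η < v r / (a*γ*Clim*Real.log r) := by
        rw [lt_div_iff₀ hL']
        linarith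
      linarith
    · -- upper bound
      have u1 : v r * (1-ε) < (1+2*ε) * (a*γ*Clim*Real.log r) := by
        nlinarith [hub', hq1, hB1]
      have hkey : 0 < η - 3*ε - η*ε := by
        nlinarith [hεη, hη, hε_pos, mul_le_mul_of_nonneg_left hε14 hη.le]
      have u2 : (1+2*ε) * (a*γ*Clim*Real.log r)
          ≤ ((1+η) * (a*γ*Clim*Real.log r)) * (1-ε) := by
        nlinarith [mul_pos hL' hkey]
      have u3 : v r < (1+η) * (a*γ*Clim*Real.log r) := by
        nlinarith [u1.trans_le u2, hε1]
      have u4 : v r / (a*γ*Clim*Real.log r) < 1+η := by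
        rw [div_lt_iff₀ hL']
        linarith
      linarith
  -- conversion back to f
  have h1 : Tendsto (fun r => (v r / (a * γ * Clim * Real.log r)) ^ (-1/γ)) atTop
      (nhds 1) := by
    have := hmain.rpow_const (p := -1/γ) (Or.inl one_ne_zero)
    rwa [Real.one_rpow] at this
  apply h1.congr'
  filter_upwards [eventually_gt_atTop 1] with r hr1
  have hrpos : (0:ℝ) < r := lt_trans one_pos hr1
  have hL : 0 < a * γ * Clim * Real.log r := by
    have := Real.log_pos hr1
    positivity
  have hH : 0 < r ^ (-a) * f r := mul_pos (Real.rpow_pos_of_pos hrpos _) (hf_pos r hrpos)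
  have e1 : (v r / (a * γ * Clim * Real.log r)) ^ (-1/γ)
      = v r ^ (-1/γ) / (a * γ * Clim * Real.log r) ^ (-1/γ) :=
    Real.div_rpow (le_of_lt (hv_pos r hrpos)) hL.le _
  have e2 : v r ^ (-1/γ) = r ^ (-a) * f r := by
    have hexp : (-γ) * (-1/γ) = 1 := by field_simp
    simp only [hvdef]
    rw [← Real.rpow_mul hH.le, hexp, Real.rpow_one]
  rw [e1, e2]
  have hX : 0 < (a * γ * Clim * Real.log r) ^ (-1/γ) := Real.rpow_pos_of_pos hL _
  have hra : 0 < r ^ a := Real.rpow_pos_of_pos hrpos a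
  rw [Real.rpow_neg hrpos.le a]
  field_simp
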